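/- Let T be a finite tree with vertex set V and edge set E, and let K : V → Finset Q be an assignment of finite sets to vertices. Then ∑_{α∈V} |K(α)| − ∑_{(α,β)∈E} |K(α) ∩ K(β)| ≥ max_{α∈V} |K(α)|, where the sum is over undirected edges. -/

import Mathlib

open SimpleGraph Walk Finset

noncomputable def rootPath {V : Type*} (G : SimpleGraph V) (hG : G.IsTree) (r w : V) :
    G.Walk w r := (hG.existsUnique_path w r).choose

lemma rootPath_isPath {V : Type*} (G : SimpleGraph V) (hG : G.IsTree) (r w : V) :
    (rootPath G hG r w).IsPath := (hG.existsUnique_path w r).choose_spec.1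

lemma rootPath_unique {V : Type*} (G : SimpleGraph V) (hG : G.IsTree) (r w : V)
    (p : G.Walk w r) (hp : p.IsPath) : p = rootPath G hG r w :=
  (hG.existsUnique_path w r).choose_spec.2 p hp

noncomputable def edgeTerm {V : Type*} [DecidableEq V] (G : SimpleGraph V) (hG : G.IsTree) (r : V)
    (L : Sym2 V → ℤ) (w : V) : ℤ :=
  if h : w ≠ r then
    L ((rootPath G hG r w).firstDart (not_nil_of_ne (by simpa using h))).edge
  else 0

theorem tree_inequality_aux
    {V : Type*} [Fintype V] [DecidableEq V]
    (G : SimpleGraph V) [DecidableRel G.Adj] (hG : G.IsTree) (r : V)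
    (L : Sym2 V → ℤ) :
    ∑ e ∈ G.edgeFinset, L e = ∑ w ∈ ({r} : Finset V)ᶜ, edgeTerm G hG r L w := by
  classical
  have hf : ∀ w, (rootPath G hG r w).IsPath := rootPath_isPath G hG r
  have hf' : ∀ w (p : G.Walk w r), p.IsPath → p = rootPath G hG r w :=
    rootPath_unique G hG r
  refine Eq.symm <| Finset.sum_bij
    (fun w hw => ((rootPath G hG r w).firstDart <| not_nil_of_ne (by simpa using hw)).edge)
    (fun a ha => by simp) ?inj ?surj ?eq
  case eq =>
    intro a ha
    unfold edgeTerm; rw [dif_pos (by simpa using ha)]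
  case inj =>
    intros a ha b hb h
    wlog h' : (rootPath G hG r a).length ≤ (rootPath G hG r b).length generalizing a b
    · exact Eq.symm (this _ hb _ ha h.symm (le_of_not_ge h'))
    rw [dart_edge_eq_iff] at h
    obtain (h | h) := h
    · exact (congrArg (·.fst) h)
    · have h1 : (rootPath G hG r a).snd = b :=
        congrArg (·.snd) h
      have h3 := congrArg Walk.length (hf' _ ((rootPath G hG r _).tail.copy h1 rfl) ?_)
      · rw [length_copy, ← add_left_inj 1,
          length_tail_add_one (not_nil_of_ne (by simpa using ha))] at h3
        omega
      · simp only [ne_eq, eq_mp_eq_cast, id_eq, isPath_copy]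
        exact (hf _).tail
  case surj =>
    simp only [mem_edgeFinset, Finset.mem_compl, Finset.mem_singleton, Sym2.forall, SimpleGraph.mem_edgeSet]
    intros x y h
    wlog h' : (rootPath G hG r x).length ≤ (rootPath G hG r y).length generalizing x y
    · rw [Sym2.eq_swap]
      exact this y x h.symm (le_of_not_ge h')
    refine ⟨y, ?_, dart_edge_eq_mk'_iff.2 <| Or.inr ?_⟩
    · rintro rfl
      rw [← hf' _ nil IsPath.nil, length_nil,
          ← hf' _ (.cons h .nil) (IsPath.nil.cons <| by simpa using h.ne),
          length_cons, length_nil] at h'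
      simp [Nat.le_zero, Nat.one_ne_zero] at h'
    rw [← hf' _ (.cons h.symm (rootPath G hG r x))
        ((cons_isPath_iff _ _).2 ⟨hf _, fun hy => ?contra⟩)]
    · simp only [firstDart_toProd, getVert_cons_succ, getVert_zero, Prod.swap_prod_mk]
    case contra =>
      suffices (rootPath G hG r x).takeUntil y hy = .cons h .nil by
        rw [← take_spec _ hy] at h'
        simp [this, hf' _ _ ((hf _).dropUntil hy)] at h'
      refine (hG.existsUnique_path _ _).unique ((hf _).takeUntil _) ?_
      simp [h.ne]

/-- for a finite tree `(V,E)` and an assignment `K` of finite subsets of `Q`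
to vertices, `∑_{α∈V} |K(α)| − ∑_{αEβ∈E} |K(α) ∩ K(β)| ≥ max_{α∈V} |K(α)|`,
the edge sum being over undirected edges. -/
theorem tree_inequality
    (V Q : Type*) [Fintype V] [Nonempty V] [DecidableEq V] [DecidableEq Q]
    (G : SimpleGraph V) [DecidableRel G.Adj] (hG : G.IsTree) (K : V → Finset Q) :
    ((Finset.univ.sup (fun α : V => (K α).card) : ℕ) : ℤ) ≤
      (∑ α : V, ((K α).card : ℤ)) -
        ∑ e ∈ G.edgeFinset,
          Sym2.lift ⟨fun a b => (((K a ∩ K b).card : ℤ)),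
            by intro a b; simp [Finset.inter_comm]⟩ e := by
  classical
  obtain ⟨r, -, hr⟩ := Finset.exists_mem_eq_sup (Finset.univ : Finset V)
    Finset.univ_nonempty (fun α : V => (K α).card)
  set L : Sym2 V → ℤ := Sym2.lift ⟨fun a b => (((K a ∩ K b).card : ℤ)),
    by intro a b; simp [Finset.inter_comm]⟩ with hL
  rw [tree_inequality_aux G hG r L]
  have hbound : ∀ w ∈ ({r} : Finset V)ᶜ, edgeTerm G hG r L w ≤ ((K w).card : ℤ) := by
    intro w hw
    unfold edgeTerm; rw [dif_pos (by simpa using hw)]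
    set d := (rootPath G hG r w).firstDart
      (not_nil_of_ne (by simpa using hw)) with hd
    have hfst : d.fst = w := rfl
    have : L d.edge = ((K d.fst ∩ K d.snd).card : ℤ) := by
      rw [Dart.edge]
      rfl
    rw [this, hfst]
    exact_mod_cast Finset.card_le_card (Finset.inter_subset_left)
  calc ((Finset.univ.sup (fun α : V => (K α).card) : ℕ) : ℤ)
      = ((K r).card : ℤ) := by rw [hr]
    _ ≤ (∑ α : V, ((K α).card : ℤ)) - ∑ w ∈ ({r} : Finset V)ᶜ, ((K w).card : ℤ) := by
        rw [← Finset.sum_compl_add_sum ({r} : Finset V) (fun α => ((K α).card : ℤ))]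
        simp
    _ ≤ _ := by
        have := Finset.sum_le_sum hbound
        linarith
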